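/- Let κ ≥ 3 be a cardinal, let α ≥ 1 be a countable ordinal, and let a ∈ T_κ^{[α]}. Then there exists an isometry φ of T_κ^{[α]} such that φ(a) = c_{ρ_a} and φ(c_r) = c_r for all r ≤ τ_a. -/

import Mathlib

open Set Filter

noncomputable section

/-- `C` is a valid label set for the valence cardinal `κ`:
`|C| = κ` if `κ` is infinite and `|C| + 1 = κ` (i.e. `|C| = κ - 1`) if `κ` is finite. -/
def IsLabelSet (κ : Cardinal) (C : Type) : Prop :=
  (Cardinal.aleph0 ≤ κ → Cardinal.mk C = κ) ∧ (κ < Cardinal.aleph0 → Cardinal.mk C + 1 = κ)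

/-- An ordinal is countable. -/
def IsCountableOrdinal (o : Ordinal) : Prop := o.card ≤ Cardinal.aleph0

/-- One-step Cantor–Bendixson derivative of a set: its non-isolated points. -/
def cbStep {X : Type*} [TopologicalSpace X] (A : Set X) : Set X :=
  {x | x ∈ A ∧ AccPt x (Filter.principal A)}

/-- The iterated Cantor–Bendixson derivative of a set. -/
def cbDeriv {X : Type*} [TopologicalSpace X] (A : Set X) (o : Ordinal) : Set X :=
  Ordinal.limitRecOn o A (fun _ ih => cbStep ih)
    (fun o _ ih => ⋂ (o' : Ordinal) (h : o' < o), ih o' h)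

/-- The Cantor–Bendixson rank of a set: the least ordinal `γ` such that the `(γ+1)`-st
Cantor–Bendixson derivative equals the `γ`-th one. -/
def cbRank {X : Type*} [TopologicalSpace X] (A : Set X) : Ordinal :=
  sInf {γ | cbDeriv A (γ + 1) = cbDeriv A γ}

theorem cbDeriv_zero {X : Type*} [TopologicalSpace X] (A : Set X) : cbDeriv A 0 = A :=
  Ordinal.limitRecOn_zero ..

theorem cbDeriv_one {X : Type*} [TopologicalSpace X] (A : Set X) :
    cbDeriv A 1 = cbStep A := by
  have : (1 : Ordinal) = Order.succ 0 := by
    rw [← Ordinal.add_one_eq_succ, zero_add]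
  rw [cbDeriv, this, Ordinal.limitRecOn_succ]
  rw [← cbDeriv, cbDeriv_zero]

theorem cbStep_empty {X : Type*} [TopologicalSpace X] : cbStep (∅ : Set X) = ∅ := by
  ext x; simp [cbStep]

theorem cbRank_empty {X : Type*} [TopologicalSpace X] : cbRank (∅ : Set X) = 0 := by
  refine le_antisymm ?_ zero_le
  refine csInf_le' ?_
  show cbDeriv (∅ : Set X) (0 + 1) = cbDeriv (∅ : Set X) 0
  rw [zero_add, cbDeriv_one, cbDeriv_zero, cbStep_empty]

/-- A point of Dyubina's universal real tree over the label set `C` (with distinguished label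
`z`): a function `(-∞, ρ) → C`, encoded as a total function on `ℝ` which takes the value `z`
on `[ρ, ∞)`, which is eventually `z` near `-∞` and piecewise constant from the right. -/
structure UTree (C : Type) (z : C) where
  ρ : ℝ
  f : ℝ → C
  apply_eq_of_ge : ∀ t, ρ ≤ t → f t = z
  eventually_zero : ∃ s, s ≤ ρ ∧ ∀ t, t < s → f t = z
  piecewise_const : ∀ t, t < ρ → ∃ ε > 0, ∀ u, t ≤ u → u ≤ t + ε → u < ρ → f u = f t

namespace UTree

variable {C : Type} {z : C}

theorem ext' {a b : UTree C z} (h1 : a.ρ = b.ρ) (h2 : a.f = b.f) : a = b := by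
  cases a; cases b; cases h1; cases h2; rfl

/-- The partial order `⪯` : `a ⪯ b` iff `a` is the restriction of `b` to `(-∞, ρ_a)`. -/
protected def le (a b : UTree C z) : Prop :=
  a.ρ ≤ b.ρ ∧ ∀ t, t < a.ρ → a.f t = b.f t

/-- The strict order `≺`. -/
protected def lt (a b : UTree C z) : Prop := a.le b ∧ a ≠ b

/-- The set of times up to which `a` and `b` agree. -/
def agreeSet (a b : UTree C z) : Set ℝ :=
  {t | t ≤ min a.ρ b.ρ ∧ ∀ u, u < t → a.f u = b.f u}

theorem agreeSet_nonempty (a b : UTree C z) : (agreeSet a b).Nonempty := by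
  obtain ⟨s₁, hs₁, h₁⟩ := a.eventually_zero
  obtain ⟨s₂, hs₂, h₂⟩ := b.eventually_zero
  refine ⟨min s₁ s₂, le_min ((min_le_left _ _).trans hs₁) ((min_le_right _ _).trans hs₂), ?_⟩
  intro u hu
  rw [h₁ u (lt_of_lt_of_le hu (min_le_left _ _)), h₂ u (lt_of_lt_of_le hu (min_le_right _ _))]

theorem agreeSet_bddAbove (a b : UTree C z) : BddAbove (agreeSet a b) :=
  ⟨min a.ρ b.ρ, fun _ ht => ht.1⟩

/-- `ρ_{a ∧ b}`, the height of the wedge of `a` and `b`. -/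
def wedgeρ (a b : UTree C z) : ℝ := sSup (agreeSet a b)

theorem wedgeρ_le_min (a b : UTree C z) : wedgeρ a b ≤ min a.ρ b.ρ :=
  csSup_le (agreeSet_nonempty a b) fun _ ht => ht.1

theorem agree_of_lt_wedgeρ (a b : UTree C z) {u : ℝ} (hu : u < wedgeρ a b) :
    a.f u = b.f u := by
  obtain ⟨t, ht, hut⟩ := exists_lt_of_lt_csSup (agreeSet_nonempty a b) hu
  exact ht.2 u hut

theorem le_wedgeρ {a b : UTree C z} {t : ℝ} (ht : t ∈ agreeSet a b) : t ≤ wedgeρ a b :=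
  le_csSup (agreeSet_bddAbove a b) ht

theorem wedgeρ_comm (a b : UTree C z) : wedgeρ a b = wedgeρ b a := by
  unfold wedgeρ agreeSet
  congr 1
  ext t
  constructor <;> rintro ⟨h1, h2⟩ <;>
    exact ⟨by rwa [min_comm], fun u hu => (h2 u hu).symm⟩

theorem wedgeρ_self (a : UTree C z) : wedgeρ a a = a.ρ := by
  refine le_antisymm ((wedgeρ_le_min a a).trans (by simp)) ?_
  exact le_wedgeρ ⟨by simp, fun _ _ => rfl⟩

/-- Restriction of `a` to `(-∞, s)` for `s ≤ ρ_a`. -/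
def restrict (a : UTree C z) (s : ℝ) (hs : s ≤ a.ρ) : UTree C z where
  ρ := s
  f := fun t => if t < s then a.f t else z
  apply_eq_of_ge := fun t ht => by
    show (if t < s then a.f t else z) = z
    rw [if_neg (not_lt.mpr ht)]
  eventually_zero := by
    obtain ⟨s', hs', h'⟩ := a.eventually_zero
    refine ⟨min s' s, min_le_right _ _, fun t ht => ?_⟩
    show (if t < s then a.f t else z) = z
    by_cases h : t < s
    · rw [if_pos h]; exact h' t (lt_of_lt_of_le ht (min_le_left _ _))
    · rw [if_neg h]
  piecewise_const := fun t ht => by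
    obtain ⟨ε, hε, h⟩ := a.piecewise_const t (lt_of_lt_of_le ht hs)
    refine ⟨ε, hε, fun u hu1 hu2 hu3 => ?_⟩
    show (if u < s then a.f u else z) = (if t < s then a.f t else z)
    rw [if_pos hu3, if_pos ht]
    exact h u hu1 hu2 (lt_of_lt_of_le hu3 hs)

/-- The wedge `a ∧ b`: the restriction of `a` to `(-∞, ρ_{a ∧ b})`. -/
def wedge (a b : UTree C z) : UTree C z :=
  a.restrict (wedgeρ a b) ((wedgeρ_le_min a b).trans (min_le_left _ _))

theorem min_wedgeρ_le (a b c : UTree C z) :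
    min (wedgeρ a b) (wedgeρ b c) ≤ wedgeρ a c := by
  refine le_wedgeρ ⟨le_min ?_ ?_, fun u hu => ?_⟩
  · exact (min_le_left _ _).trans ((wedgeρ_le_min a b).trans (min_le_left _ _))
  · exact (min_le_right _ _).trans ((wedgeρ_le_min b c).trans (min_le_right _ _))
  · have h1 : a.f u = b.f u :=
      agree_of_lt_wedgeρ a b (lt_of_lt_of_le hu (min_le_left _ _))
    have h2 : b.f u = c.f u :=
      agree_of_lt_wedgeρ b c (lt_of_lt_of_le hu (min_le_right _ _))
    exact h1.trans h2

/-- The metric `d(a,b) = ρ_a + ρ_b - 2 ρ_{a ∧ b}` on the universal real tree. -/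
instance : MetricSpace (UTree C z) where
  dist a b := a.ρ + b.ρ - 2 * wedgeρ a b
  dist_self a := by simp [wedgeρ_self]; ring
  dist_comm a b := by simp only [wedgeρ_comm a b]; ring
  dist_triangle a b c := by
    have hmin := min_wedgeρ_le a b c
    have h1 : wedgeρ a b ≤ b.ρ := (wedgeρ_le_min a b).trans (min_le_right _ _)
    have h2 : wedgeρ b c ≤ b.ρ := (wedgeρ_le_min b c).trans (min_le_left _ _)
    rcases min_cases (wedgeρ a b) (wedgeρ b c) with ⟨heq, hle⟩ | ⟨heq, hle⟩ <;>
      (rw [heq] at hmin; linarith)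
  eq_of_dist_eq_zero := by
    intro a b h
    have h1 : wedgeρ a b ≤ a.ρ := (wedgeρ_le_min a b).trans (min_le_left _ _)
    have h2 : wedgeρ a b ≤ b.ρ := (wedgeρ_le_min a b).trans (min_le_right _ _)
    have hd : a.ρ + b.ρ - 2 * wedgeρ a b = 0 := h
    have ha : a.ρ = wedgeρ a b := by linarith
    have hb : b.ρ = wedgeρ a b := by linarith
    refine ext' (ha.trans hb.symm) (funext fun t => ?_)
    by_cases ht : t < wedgeρ a b
    · exact agree_of_lt_wedgeρ a b ht
    · rw [a.apply_eq_of_ge t (ha.le.trans (not_lt.mp ht)),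
        b.apply_eq_of_ge t (hb.le.trans (not_lt.mp ht))]

theorem dist_def (a b : UTree C z) : dist a b = a.ρ + b.ρ - 2 * wedgeρ a b := rfl

/-- The point `c_ℓ`: the constant function `(-∞, ℓ) → C` with value `z`. -/
def cconst (ℓ : ℝ) : UTree C z where
  ρ := ℓ
  f := fun _ => z
  apply_eq_of_ge := fun _ _ => rfl
  eventually_zero := ⟨ℓ, le_refl ℓ, fun _ _ => rfl⟩
  piecewise_const := fun _ _ => ⟨1, one_pos, fun _ _ _ _ => rfl⟩

/-- The set of points at which `a` is locally non-constant from the left, whose closure is the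
set `P_a`. -/
def badSet (a : UTree C z) : Set ℝ :=
  {t | t < a.ρ ∧ ∀ ε > 0, ∃ u ∈ Icc (t - ε) t, ∃ v ∈ Icc (t - ε) t, a.f u ≠ a.f v}

/-- The set `P_a`. -/
def Pset (a : UTree C z) : Set ℝ := closure (badSet a)

/-- The complexity of `a`: the Cantor–Bendixson rank of `P_a`. -/
def comp (a : UTree C z) : Ordinal := cbRank (Pset a)

/-- The complexity of a pair `a ≺ b`: the Cantor–Bendixson rank of `P_b ∩ [ρ_a, ρ_b]`. -/
def pairComp (a b : UTree C z) : Ordinal := cbRank (Pset b ∩ Icc a.ρ b.ρ)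

/-- `τ_a`: the maximum of all `s ≤ ρ_a` such that `a` is `z` below `s`. -/
def tau (a : UTree C z) : ℝ := sSup {s | s ≤ a.ρ ∧ ∀ t, t < s → a.f t = z}

/-- The tree `T_κ^{[α]}` of points of complexity at most `α`. -/
def level (z : C) (α : Ordinal) : Set (UTree C z) := {a | comp a ≤ α}

theorem Pset_cconst (ℓ : ℝ) : Pset (cconst ℓ : UTree C z) = ∅ := by
  have : badSet (cconst ℓ : UTree C z) = ∅ := by
    ext t
    simp only [badSet, mem_setOf_eq, mem_empty_iff_false, iff_false, not_and]
    intro _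
    push_neg
    exact ⟨1, one_pos, fun u _ v _ => rfl⟩
  rw [Pset, this, closure_empty]

theorem comp_cconst (ℓ : ℝ) : comp (cconst ℓ : UTree C z) = 0 := by
  rw [comp, Pset_cconst, cbRank_empty]

theorem cconst_mem_level {ℓ : ℝ} (α : Ordinal) : (cconst ℓ : UTree C z) ∈ level z α := by
  show comp _ ≤ α
  rw [comp_cconst]
  exact zero_le

/-- The canonical line `L_0 = {c_ℓ : ℓ ∈ ℝ}`. -/
def L0 (z : C) : Set (UTree C z) := Set.range fun ℓ => (cconst ℓ : UTree C z)

/-- The extension of `a` by the label `c` on `[ρ_a, ρ_a + 1)`. -/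
def extend (a : UTree C z) (c : C) : UTree C z where
  ρ := a.ρ + 1
  f := fun t => if t < a.ρ then a.f t else if t < a.ρ + 1 then c else z
  apply_eq_of_ge := fun t ht => by
    show (if t < a.ρ then a.f t else if t < a.ρ + 1 then c else z) = z
    rw [if_neg (not_lt.mpr (by linarith)), if_neg (not_lt.mpr ht)]
  eventually_zero := by
    obtain ⟨s, hs, h⟩ := a.eventually_zero
    refine ⟨min s a.ρ, by have := min_le_right s a.ρ; linarith, fun t ht => ?_⟩
    show (if t < a.ρ then a.f t else if t < a.ρ + 1 then c else z) = z
    rw [if_pos (lt_of_lt_of_le ht (min_le_right _ _))]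
    exact h t (lt_of_lt_of_le ht (min_le_left _ _))
  piecewise_const := by
    intro t ht
    by_cases htρ : t < a.ρ
    · obtain ⟨ε, hε, h⟩ := a.piecewise_const t htρ
      refine ⟨min ε ((a.ρ - t) / 2), lt_min hε (by linarith), fun u hu1 hu2 _ => ?_⟩
      have hu3 : u < a.ρ := by
        have := hu2.trans (add_le_add (le_refl t) (min_le_right _ _))
        linarith
      show (if u < a.ρ then a.f u else if u < a.ρ + 1 then c else z) =
        (if t < a.ρ then a.f t else if t < a.ρ + 1 then c else z)
      rw [if_pos hu3, if_pos htρ]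
      exact h u hu1 (hu2.trans (add_le_add (le_refl t) (min_le_left _ _))) hu3
    · refine ⟨(a.ρ + 1 - t) / 2, by linarith, fun u hu1 hu2 _ => ?_⟩
      have h1 : ¬u < a.ρ := by push_neg at htρ ⊢; linarith
      have h2 : u < a.ρ + 1 := by linarith
      show (if u < a.ρ then a.f u else if u < a.ρ + 1 then c else z) =
        (if t < a.ρ then a.f t else if t < a.ρ + 1 then c else z)
      rw [if_neg h1, if_pos h2, if_neg htρ, if_pos ht]

end UTree

/-- A subset of a metric space is (geodesically) convex if it contains every point
metrically between two of its points. -/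
def MetricConvex {X : Type*} [MetricSpace X] (S : Set X) : Prop :=
  ∀ x ∈ S, ∀ y ∈ S, ∀ w, dist x w + dist w y = dist x y → w ∈ S

/-- `D` is a direction at `x`: a connected component of the complement of `{x}`. -/
def IsDirectionAt {X : Type*} [TopologicalSpace X] (x : X) (D : Set X) : Prop :=
  ∃ y, y ≠ x ∧ D = connectedComponentIn {w | w ≠ x} y

/-- The valence of a space at a point: the number of connected components of the
complement of that point. -/
def valenceAt {X : Type*} [TopologicalSpace X] (x : X) : Cardinal :=
  Cardinal.mk {D : Set X // IsDirectionAt x D}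

/-- A real tree: a geodesic metric space in which any two points are joined by a unique arc. -/
def IsRealTree (X : Type*) [MetricSpace X] : Prop :=
  (∀ x y : X, ∃ γ : ℝ → X, γ 0 = x ∧ γ (dist x y) = y ∧
      ∀ s ∈ Icc (0 : ℝ) (dist x y), ∀ t ∈ Icc (0 : ℝ) (dist x y),
        dist (γ s) (γ t) = |s - t|) ∧
  (∀ (x y : X) (γ₁ γ₂ : Path x y), Function.Injective γ₁ → Function.Injective γ₂ →
      Set.range γ₁ = Set.range γ₂)

/-! ### Auxiliary Cantor–Bendixson lemmas -/

section CBAux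

variable {X : Type*} [TopologicalSpace X]

theorem cbStep_subset' (A : Set X) : cbStep A ⊆ A := fun _ hx => hx.1

theorem cbStep_eq_inter (A : Set X) : cbStep A = A ∩ derivedSet A := rfl

theorem cbDeriv_succ' (A : Set X) (o : Ordinal) :
    cbDeriv A (o + 1) = cbStep (cbDeriv A o) := by
  rw [cbDeriv, Ordinal.add_one_eq_succ, Ordinal.limitRecOn_succ]
  rfl

theorem cbDeriv_limit' (A : Set X) {o : Ordinal} (ho : Order.IsSuccLimit o) :
    cbDeriv A o = ⋂ (o' : Ordinal) (_ : o' < o), cbDeriv A o' := by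
  rw [cbDeriv, Ordinal.limitRecOn_limit _ _ _ _ ho]
  rfl

theorem cbStep_mono {A B : Set X} (h : A ⊆ B) : cbStep A ⊆ cbStep B :=
  fun _ hx => ⟨h hx.1, hx.2.mono (Filter.principal_mono.2 h)⟩

theorem cbDeriv_mono {A B : Set X} (h : A ⊆ B) (o : Ordinal) :
    cbDeriv A o ⊆ cbDeriv B o := by
  induction o using Ordinal.limitRecOn with
  | zero => rw [cbDeriv_zero, cbDeriv_zero]; exact h
  | add_one o ih =>
    rw [cbDeriv_succ', cbDeriv_succ']
    exact cbStep_mono ih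
  | limit o ho ih =>
    rw [cbDeriv_limit' A ho, cbDeriv_limit' B ho]
    exact Set.iInter₂_mono fun o' h' => ih o' h'

theorem cbDeriv_anti (A : Set X) {γ δ : Ordinal} (h : γ ≤ δ) :
    cbDeriv A δ ⊆ cbDeriv A γ := by
  induction δ using Ordinal.limitRecOn with
  | zero =>
    rw [nonpos_iff_eq_zero.mp h]
  | add_one o ih =>
    rcases eq_or_lt_of_le h with rfl | hlt
    · exact subset_rfl
    · have hle : γ ≤ o := Order.lt_add_one_iff.mp hlt
      rw [cbDeriv_succ']
      exact (cbStep_subset' _).trans (ih hle)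
  | limit o ho _ =>
    rcases eq_or_lt_of_le h with rfl | hlt
    · exact subset_rfl
    · rw [cbDeriv_limit' A ho]
      exact Set.iInter₂_subset γ hlt

theorem cbDeriv_isClosed [T1Space X] {A : Set X} (hA : IsClosed A) (o : Ordinal) :
    IsClosed (cbDeriv A o) := by
  induction o using Ordinal.limitRecOn with
  | zero => rwa [cbDeriv_zero]
  | add_one o ih =>
    rw [cbDeriv_succ', cbStep_eq_inter]
    exact ih.inter (isClosed_derivedSet _)
  | limit o ho ih =>
    rw [cbDeriv_limit' A ho]
    exact isClosed_iInter fun o' => isClosed_iInter fun h => ih o' h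

theorem cbStep_union_of_closed [T1Space X] {A B : Set X} (hA : IsClosed A) (hB : IsClosed B) :
    cbStep (A ∪ B) = cbStep A ∪ cbStep B := by
  rw [cbStep_eq_inter, cbStep_eq_inter, cbStep_eq_inter, derivedSet_union]
  ext x
  constructor
  · rintro ⟨_, hd | hd⟩
    · exact Or.inl ⟨(isClosed_iff_derivedSet_subset A).mp hA hd, hd⟩
    · exact Or.inr ⟨(isClosed_iff_derivedSet_subset B).mp hB hd, hd⟩
  · rintro (⟨h1, h2⟩ | ⟨h1, h2⟩)
    · exact ⟨Or.inl h1, Or.inl h2⟩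
    · exact ⟨Or.inr h1, Or.inr h2⟩

theorem cbDeriv_union_of_closed [T1Space X] {A B : Set X} (hA : IsClosed A) (hB : IsClosed B)
    (o : Ordinal) : cbDeriv (A ∪ B) o = cbDeriv A o ∪ cbDeriv B o := by
  induction o using Ordinal.limitRecOn with
  | zero => rw [cbDeriv_zero, cbDeriv_zero, cbDeriv_zero]
  | add_one o ih =>
    rw [cbDeriv_succ', cbDeriv_succ', cbDeriv_succ', ih,
      cbStep_union_of_closed (cbDeriv_isClosed hA o) (cbDeriv_isClosed hB o)]
  | limit o ho ih =>
    rw [cbDeriv_limit' (A ∪ B) ho, cbDeriv_limit' A ho, cbDeriv_limit' B ho]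
    apply Set.Subset.antisymm
    · intro x hx
      rw [Set.mem_iInter₂] at hx
      by_cases hA' : ∀ o', o' < o → x ∈ cbDeriv A o'
      · exact Or.inl (Set.mem_iInter₂.mpr hA')
      · push_neg at hA'
        obtain ⟨γ, hγ, hxγ⟩ := hA'
        refine Or.inr (Set.mem_iInter₂.mpr fun o' ho' => ?_)
        have hmax : max γ o' < o := max_lt hγ ho'
        have hx' := hx (max γ o') hmax
        rw [ih (max γ o') hmax] at hx'
        rcases hx' with h | h
        · exact absurd (cbDeriv_anti A (le_max_left γ o') h) hxγ
        · exact cbDeriv_anti B (le_max_right γ o') h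
    · rintro x (h | h) <;> rw [Set.mem_iInter₂] at h ⊢ <;> intro o' ho' <;>
        rw [ih o' ho']
      · exact Or.inl (h o' ho')
      · exact Or.inr (h o' ho')

theorem cbStep_singleton [T1Space X] (x : X) : cbStep ({x} : Set X) = ∅ := by
  ext y
  simp only [cbStep, Set.mem_setOf_eq, Set.mem_empty_iff_false, iff_false, not_and,
    Set.mem_singleton_iff]
  rintro rfl h
  rw [accPt_iff_clusterPt, Filter.inf_principal, Set.compl_inter_self, Filter.principal_empty] at h
  have h2 : Filter.NeBot (nhds y ⊓ (⊥ : Filter X)) := h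
  rw [inf_bot_eq] at h2
  exact h2.ne rfl

theorem cbStab_nonempty {Y : Type} [TopologicalSpace Y] (A : Set Y) :
    {γ : Ordinal.{u} | cbDeriv A (γ + 1) = cbDeriv A γ}.Nonempty := by
  by_contra hcon
  rw [Set.not_nonempty_iff_eq_empty] at hcon
  have hne : ∀ γ : Ordinal.{u}, cbDeriv A (γ + 1) ≠ cbDeriv A γ := by
    intro γ hγ
    have : γ ∈ {γ : Ordinal.{u} | cbDeriv A (γ + 1) = cbDeriv A γ} := hγ
    rw [hcon] at this
    exact this
  have hssub : ∀ γ : Ordinal.{u}, cbDeriv A (γ + 1) ⊂ cbDeriv A γ := fun γ =>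
    HasSubset.Subset.ssubset_of_ne
      (by rw [cbDeriv_succ']; exact cbStep_subset' _) (hne γ)
  have hstrict : ∀ {γ δ : Ordinal.{u}}, γ < δ → cbDeriv A δ ⊂ cbDeriv A γ := by
    intro γ δ hlt
    refine lt_of_le_of_lt ?_ (hssub γ)
    exact cbDeriv_anti A (by rw [Ordinal.add_one_eq_succ]; exact Order.succ_le_of_lt hlt)
  have hinj : Function.Injective (fun γ : Ordinal.{u} => cbDeriv A γ) := by
    intro γ δ hEq
    rcases lt_trichotomy γ δ with h | h | h
    · exact absurd hEq.symm (hstrict h).ne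
    · exact h
    · exact absurd hEq (hstrict h).ne
  exact not_injective_of_ordinal _ hinj

theorem cbDeriv_eq_empty_of_cbRank_le {A : Set ℝ} (hA : IsClosed A) (hc : A.Countable)
    {α : Ordinal} (h : cbRank A ≤ α) : cbDeriv A α = ∅ := by
  have hne := cbStab_nonempty A
  have hmem : cbRank A ∈ {γ : Ordinal | cbDeriv A (γ + 1) = cbDeriv A γ} := csInf_mem hne
  set β := cbRank A with hβ
  have hstep : cbStep (cbDeriv A β) = cbDeriv A β := by
    rw [← cbDeriv_succ']; exact hmem
  rcases Set.eq_empty_or_nonempty (cbDeriv A β) with hKe | hKne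
  · exact Set.eq_empty_of_subset_empty (hKe ▸ cbDeriv_anti A h)
  · exfalso
    have hKc : (cbDeriv A β).Countable := by
      refine hc.mono ?_
      have := cbDeriv_anti A ((zero_le : (0:Ordinal) ≤ β))
      rwa [cbDeriv_zero] at this
    have hperf : Perfect (cbDeriv A β) := by
      refine ⟨cbDeriv_isClosed hA β, fun x hx => ?_⟩
      have : x ∈ cbStep (cbDeriv A β) := by rw [hstep]; exact hx
      exact this.2
    obtain ⟨f, hrange, _, hinj⟩ := hperf.exists_nat_bool_injection hKne
    have hpre : (f ⁻¹' (cbDeriv A β)).Countable := hKc.preimage hinj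
    have huniv : f ⁻¹' (cbDeriv A β) = Set.univ :=
      Set.eq_univ_of_forall fun x => hrange ⟨x, rfl⟩
    rw [huniv, Set.countable_univ_iff] at hpre
    classical
    obtain ⟨g, hg⟩ := exists_injective_nat (ℕ → Bool)
    refine Function.cantor_injective (fun s : Set ℕ => g fun n => decide (n ∈ s)) ?_
    intro s t hst
    have hft := hg hst
    ext n
    have := congrFun hft n
    simpa using this

end CBAux


/-! ### The label-swapping isometry -/

namespace UTree

variable {C : Type} {z : C}

open Classical in
/-- The transposition of labels swapping `a.f u` and `z`. -/
noncomputable def swapLabel (a : UTree C z) (u : ℝ) (c : C) : C :=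
  if c = a.f u then z else if c = z then a.f u else c

theorem swapLabel_of_eq (a : UTree C z) (u : ℝ) {c : C} (h1 : c = a.f u) :
    swapLabel a u c = z := by
  rw [swapLabel, if_pos h1]

theorem swapLabel_eq_self (a : UTree C z) (u : ℝ) {c : C} (h1 : c ≠ a.f u) (h2 : c ≠ z) :
    swapLabel a u c = c := by
  rw [swapLabel, if_neg h1, if_neg h2]

theorem swapLabel_z (a : UTree C z) (u : ℝ) : swapLabel a u z = a.f u := by
  by_cases h : z = a.f u
  · rw [swapLabel_of_eq a u h]
    exact h
  · rw [swapLabel, if_neg h, if_pos rfl]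

theorem swapLabel_apply_self (a : UTree C z) (u : ℝ) : swapLabel a u (a.f u) = z :=
  swapLabel_of_eq a u rfl

theorem swapLabel_swapLabel (a : UTree C z) (u : ℝ) (c : C) :
    swapLabel a u (swapLabel a u c) = c := by
  by_cases h1 : c = a.f u
  · rw [swapLabel_of_eq a u h1, swapLabel_z, h1]
  · by_cases h2 : c = z
    · subst h2
      rw [swapLabel_z, swapLabel_apply_self]
    · rw [swapLabel_eq_self a u h1 h2, swapLabel_eq_self a u h1 h2]

theorem swapLabel_congr (a : UTree C z) {u v : ℝ} (h : a.f u = a.f v) (c : C) :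
    swapLabel a u c = swapLabel a v c := by
  unfold swapLabel
  rw [h]

/-- The candidate isometry on points: swap `a.f u` with `z` at every time `u`. -/
noncomputable def flip (a b : UTree C z) : UTree C z where
  ρ := b.ρ
  f := fun u => if u < b.ρ then swapLabel a u (b.f u) else z
  apply_eq_of_ge := fun t ht => by
    show (if t < b.ρ then swapLabel a t (b.f t) else z) = z
    rw [if_neg (not_lt.mpr ht)]
  eventually_zero := by
    obtain ⟨s₁, hs₁, h₁⟩ := a.eventually_zero
    obtain ⟨s₂, hs₂, h₂⟩ := b.eventually_zero
    refine ⟨min s₁ s₂, (min_le_right _ _).trans hs₂, fun t ht => ?_⟩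
    show (if t < b.ρ then swapLabel a t (b.f t) else z) = z
    have ht1 : t < s₁ := lt_of_lt_of_le ht (min_le_left _ _)
    have ht2 : t < s₂ := lt_of_lt_of_le ht (min_le_right _ _)
    by_cases h : t < b.ρ
    · rw [if_pos h, h₂ t ht2, swapLabel_z, h₁ t ht1]
    · rw [if_neg h]
  piecewise_const := by
    intro t ht
    obtain ⟨ε₁, hε₁, hb⟩ := b.piecewise_const t ht
    have haux : ∃ ε > 0, ∀ u, t ≤ u → u ≤ t + ε → a.f u = a.f t := by
      by_cases hta : t < a.ρ
      · obtain ⟨ε₂, hε₂, h⟩ := a.piecewise_const t hta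
        refine ⟨min ε₂ ((a.ρ - t) / 2), lt_min hε₂ (by linarith), fun u hu1 hu2 => ?_⟩
        have hu3 : u < a.ρ := by
          have := hu2.trans (add_le_add_right (min_le_right _ _) t)
          linarith
        exact h u hu1 (hu2.trans (add_le_add_right (min_le_left _ _) t)) hu3
      · push_neg at hta
        refine ⟨1, one_pos, fun u hu1 _ => ?_⟩
        rw [a.apply_eq_of_ge u (hta.trans hu1), a.apply_eq_of_ge t hta]
    obtain ⟨ε₂, hε₂, haconst⟩ := haux
    refine ⟨min ε₁ ε₂, lt_min hε₁ hε₂, fun u hu1 hu2 hu3 => ?_⟩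
    show (if u < b.ρ then swapLabel a u (b.f u) else z) =
      (if t < b.ρ then swapLabel a t (b.f t) else z)
    rw [if_pos hu3, if_pos ht,
      hb u hu1 (hu2.trans (add_le_add_right (min_le_left _ _) t)) hu3,
      swapLabel_congr a (haconst u hu1 (hu2.trans (add_le_add_right (min_le_right _ _) t)))]

theorem ρ_flip (a b : UTree C z) : (flip a b).ρ = b.ρ := rfl

theorem flip_f_of_lt (a b : UTree C z) {u : ℝ} (h : u < b.ρ) :
    (flip a b).f u = swapLabel a u (b.f u) := if_pos h

theorem flip_flip (a b : UTree C z) : flip a (flip a b) = b := by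
  refine ext' rfl (funext fun u => ?_)
  show (if u < b.ρ then swapLabel a u ((flip a b).f u) else z) = b.f u
  by_cases h : u < b.ρ
  · rw [if_pos h, flip_f_of_lt a b h, swapLabel_swapLabel]
  · rw [if_neg h]
    exact (b.apply_eq_of_ge u (not_lt.mp h)).symm

theorem agreeSet_flip (a b b' : UTree C z) :
    agreeSet (flip a b) (flip a b') = agreeSet b b' := by
  ext t
  simp only [agreeSet, Set.mem_setOf_eq, ρ_flip]
  constructor
  · rintro ⟨h1, h2⟩
    refine ⟨h1, fun u hu => ?_⟩
    have hub : u < b.ρ := lt_of_lt_of_le hu (h1.trans (min_le_left _ _))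
    have hub' : u < b'.ρ := lt_of_lt_of_le hu (h1.trans (min_le_right _ _))
    have := h2 u hu
    rw [flip_f_of_lt a b hub, flip_f_of_lt a b' hub'] at this
    have := congrArg (swapLabel a u) this
    rwa [swapLabel_swapLabel, swapLabel_swapLabel] at this
  · rintro ⟨h1, h2⟩
    refine ⟨h1, fun u hu => ?_⟩
    have hub : u < b.ρ := lt_of_lt_of_le hu (h1.trans (min_le_left _ _))
    have hub' : u < b'.ρ := lt_of_lt_of_le hu (h1.trans (min_le_right _ _))
    rw [flip_f_of_lt a b hub, flip_f_of_lt a b' hub', h2 u hu]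

theorem dist_flip (a b b' : UTree C z) : dist (flip a b) (flip a b') = dist b b' := by
  rw [dist_def, dist_def, ρ_flip, ρ_flip]
  unfold wedgeρ
  rw [agreeSet_flip]

theorem flip_self (a : UTree C z) : flip a a = cconst a.ρ := by
  refine ext' rfl (funext fun u => ?_)
  show (if u < a.ρ then swapLabel a u (a.f u) else z) = z
  by_cases h : u < a.ρ
  · rw [if_pos h, swapLabel_apply_self]
  · rw [if_neg h]

theorem tau_apply (a : UTree C z) {u : ℝ} (h : u < tau a) : a.f u = z := by
  have hne : {s : ℝ | s ≤ a.ρ ∧ ∀ t, t < s → a.f t = z}.Nonempty := by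
    obtain ⟨s, hs, hsz⟩ := a.eventually_zero
    exact ⟨s, hs, hsz⟩
  obtain ⟨s, hs, hus⟩ := exists_lt_of_lt_csSup hne h
  exact hs.2 u hus

theorem flip_cconst (a : UTree C z) {r : ℝ} (hr : r ≤ tau a) :
    flip a (cconst r) = cconst r := by
  refine ext' rfl (funext fun u => ?_)
  show (if u < r then swapLabel a u ((cconst r : UTree C z).f u) else z) =
    (cconst r : UTree C z).f u
  show (if u < r then swapLabel a u z else z) = z
  by_cases h : u < r
  · rw [if_pos h, swapLabel_z, tau_apply a (lt_of_lt_of_le h hr)]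
  · rw [if_neg h]

/-- Every point of `ℝ` has a right neighbourhood free of `Pset a`. -/
theorem exists_right_gap (a : UTree C z) (t : ℝ) :
    ∃ ε > 0, ∀ s ∈ Ioo t (t + ε), s ∉ Pset a := by
  have key : ∃ ε > 0, ∀ s ∈ Ioo t (t + ε), s ∉ badSet a := by
    by_cases ht : t < a.ρ
    · obtain ⟨ε, hε, hconst⟩ := a.piecewise_const t ht
      refine ⟨ε, hε, fun s hs hbad => ?_⟩
      obtain ⟨u, hu, v, hv, huv⟩ := hbad.2 (s - t) (by linarith [hs.1])
      have hut : t ≤ u := by have := hu.1; linarith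
      have hvt : t ≤ v := by have := hv.1; linarith
      have hus : u ≤ s := hu.2
      have hvs : v ≤ s := hv.2
      have hu2 : u ≤ t + ε := hus.trans hs.2.le
      have hv2 : v ≤ t + ε := hvs.trans hs.2.le
      have huρ : u < a.ρ := lt_of_le_of_lt hus hbad.1
      have hvρ : v < a.ρ := lt_of_le_of_lt hvs hbad.1
      exact huv ((hconst u hut hu2 huρ).trans (hconst v hvt hv2 hvρ).symm)
    · push_neg at ht
      refine ⟨1, one_pos, fun s hs hbad => ?_⟩
      exact absurd hbad.1 (not_lt.mpr (ht.trans hs.1.le))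
  obtain ⟨ε, hε, hgap⟩ := key
  refine ⟨ε, hε, fun s hs hmem => ?_⟩
  have hsub : badSet a ⊆ (Ioo t (t + ε))ᶜ := fun x hx hxi => hgap x hxi hx
  have := closure_minimal hsub (isClosed_compl_iff.mpr isOpen_Ioo)
  exact this hmem hs

theorem Pset_countable (a : UTree C z) : (Pset a).Countable := by
  classical
  have H : ∀ s : ℝ, ∃ q : ℚ, s ∈ Pset a →
      (s < (q : ℝ) ∧ ∀ s' ∈ Pset a, s < s' → (q : ℝ) < s') := by
    intro s
    by_cases hs : s ∈ Pset a
    · obtain ⟨ε, hε, hgap⟩ := exists_right_gap a s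
      obtain ⟨q, hq1, hq2⟩ := exists_rat_btwn (show s < s + ε by linarith)
      refine ⟨q, fun _ => ⟨hq1, fun s' hs' hss' => ?_⟩⟩
      by_contra hcon
      push_neg at hcon
      exact hgap s' ⟨hss', lt_of_le_of_lt hcon hq2⟩ hs'
    · exact ⟨0, fun h => absurd h hs⟩
  choose q hq using H
  have hinj : Set.InjOn q (Pset a) := by
    intro s hs s' hs' hqq
    by_contra hne
    rcases lt_or_gt_of_ne hne with h | h
    · have h1 := (hq s hs).2 s' hs' h
      have h2 := (hq s' hs').1
      rw [hqq] at h1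
      exact absurd h2 (not_lt.mpr h1.le)
    · have h1 := (hq s' hs').2 s hs h
      have h2 := (hq s hs).1
      rw [hqq] at h2
      exact absurd h2 (not_lt.mpr h1.le)
  exact Set.countable_of_injective_of_countable_image hinj (Set.to_countable _)

theorem badSet_flip_subset (a b : UTree C z) :
    badSet (flip a b) ⊆ badSet b ∪ badSet a ∪ {a.ρ} := by
  intro t ht
  by_contra hcon
  simp only [Set.mem_union, Set.mem_singleton_iff, not_or] at hcon
  obtain ⟨⟨hnb, hna⟩, hnρ⟩ := hcon
  have htρ : t < b.ρ := ht.1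
  -- left-constancy of b at t
  have hbconst : ∃ ε > 0, ∀ u ∈ Icc (t - ε) t, ∀ v ∈ Icc (t - ε) t, b.f u = b.f v := by
    by_contra h
    push_neg at h
    exact hnb ⟨htρ, fun ε hε => by
      obtain ⟨u, hu, v, hv, huv⟩ := h ε hε
      exact ⟨u, hu, v, hv, huv⟩⟩
  -- left-constancy of a at t
  have haconst : ∃ ε > 0, ∀ u ∈ Icc (t - ε) t, ∀ v ∈ Icc (t - ε) t, a.f u = a.f v := by
    rcases lt_trichotomy t a.ρ with hlt | heq | hgt
    · by_contra h
      push_neg at h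
      exact hna ⟨hlt, fun ε hε => by
        obtain ⟨u, hu, v, hv, huv⟩ := h ε hε
        exact ⟨u, hu, v, hv, huv⟩⟩
    · exact absurd heq hnρ
    · refine ⟨t - a.ρ, by linarith, fun u hu v hv => ?_⟩
      rw [a.apply_eq_of_ge u (by have := hu.1; linarith),
        a.apply_eq_of_ge v (by have := hv.1; linarith)]
  obtain ⟨ε₁, hε₁, hbc⟩ := hbconst
  obtain ⟨ε₂, hε₂, hac⟩ := haconst
  obtain ⟨u, hu, v, hv, huv⟩ := ht.2 (min ε₁ ε₂) (lt_min hε₁ hε₂)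
  have hIcc : Icc (t - min ε₁ ε₂) t ⊆ Icc (t - ε₁) t := by
    apply Icc_subset_Icc_left
    have := min_le_left ε₁ ε₂
    linarith
  have hIcc2 : Icc (t - min ε₁ ε₂) t ⊆ Icc (t - ε₂) t := by
    apply Icc_subset_Icc_left
    have := min_le_right ε₁ ε₂
    linarith
  have huρ : u < b.ρ := lt_of_le_of_lt hu.2 htρ
  have hvρ : v < b.ρ := lt_of_le_of_lt hv.2 htρ
  apply huv
  rw [flip_f_of_lt a b huρ, flip_f_of_lt a b hvρ,
    hbc u (hIcc hu) v (hIcc hv), swapLabel_congr a (hac u (hIcc2 hu) v (hIcc2 hv))]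

theorem Pset_flip_subset (a b : UTree C z) :
    Pset (flip a b) ⊆ Pset b ∪ Pset a ∪ {a.ρ} := by
  have h1 : Pset b ∪ Pset a ∪ {a.ρ} = closure (badSet b ∪ badSet a ∪ {a.ρ}) := by
    rw [closure_union, closure_union, closure_singleton]
    rfl
  rw [Pset, h1]
  exact closure_mono (badSet_flip_subset a b)

theorem comp_flip_le {a b : UTree C z} {α : Ordinal} (hα1 : 1 ≤ α)
    (ha : comp a ≤ α) (hb : comp b ≤ α) : comp (flip a b) ≤ α := by
  have hDa : cbDeriv (Pset a) α = ∅ :=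
    cbDeriv_eq_empty_of_cbRank_le isClosed_closure (Pset_countable a) ha
  have hDb : cbDeriv (Pset b) α = ∅ :=
    cbDeriv_eq_empty_of_cbRank_le isClosed_closure (Pset_countable b) hb
  have hDs : cbDeriv ({a.ρ} : Set ℝ) α = ∅ := by
    have h1 : cbDeriv ({a.ρ} : Set ℝ) α ⊆ cbDeriv ({a.ρ} : Set ℝ) 1 := cbDeriv_anti _ hα1
    rw [cbDeriv_one, cbStep_singleton] at h1
    exact Set.eq_empty_of_subset_empty h1
  have hPa : IsClosed (Pset a) := isClosed_closure
  have hPb : IsClosed (Pset b) := isClosed_closure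
  have hUnion : cbDeriv (Pset b ∪ Pset a ∪ {a.ρ}) α = ∅ := by
    rw [cbDeriv_union_of_closed (hPb.union hPa) isClosed_singleton,
      cbDeriv_union_of_closed hPb hPa, hDa, hDb, hDs]
    simp
  have hD : cbDeriv (Pset (flip a b)) α = ∅ :=
    Set.eq_empty_of_subset_empty
      ((cbDeriv_mono (Pset_flip_subset a b) α).trans hUnion.subset)
  refine le_trans (csInf_le' ?_) le_rfl
  show cbDeriv (Pset (flip a b)) (α + 1) = cbDeriv (Pset (flip a b)) α
  rw [cbDeriv_succ', hD, cbStep_empty]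

end UTree

/-- Claim 1 of Lemma 2-transitive: for every `a ∈ T_κ^{[α]}` there is an isometry of
`T_κ^{[α]}` sending `a` to `c_{ρ_a}` and fixing `c_r` for all `r ≤ τ_a`. -/
theorem stmt7 (κ : Cardinal) (hκ : 3 ≤ κ) (C : Type) (z : C) (hC : IsLabelSet κ C)
    (α : Ordinal) (hα1 : 1 ≤ α) (hαc : IsCountableOrdinal α)
    (a : UTree C z) (ha : a ∈ UTree.level z α) :
    ∃ φ : ↥(UTree.level z α) ≃ᵢ ↥(UTree.level z α),
      φ ⟨a, ha⟩ = ⟨UTree.cconst a.ρ, UTree.cconst_mem_level α⟩ ∧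
      ∀ r : ℝ, r ≤ UTree.tau a →
        φ ⟨UTree.cconst r, UTree.cconst_mem_level α⟩ =
          ⟨UTree.cconst r, UTree.cconst_mem_level α⟩ := by
  classical
  have hmem : ∀ b : UTree C z, b ∈ UTree.level z α → UTree.flip a b ∈ UTree.level z α :=
    fun b hb => UTree.comp_flip_le hα1 ha hb
  refine ⟨⟨⟨fun b => ⟨UTree.flip a b.1, hmem _ b.2⟩, fun b => ⟨UTree.flip a b.1, hmem _ b.2⟩,
      fun b => Subtype.ext (UTree.flip_flip a b.1),
      fun b => Subtype.ext (UTree.flip_flip a b.1)⟩,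
      Isometry.of_dist_eq fun b b' => ?_⟩, ?_, ?_⟩
  · show dist (UTree.flip a b.1) (UTree.flip a b'.1) = dist b.1 b'.1
    exact UTree.dist_flip a b.1 b'.1
  · exact Subtype.ext (UTree.flip_self a)
  · intro r hr
    exact Subtype.ext (UTree.flip_cconst a hr)

end
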